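/- Assume (E', E'') is a stacking partition of Λ (conditions (a) and (b)). Then for every n ≥ 1, the n-generated finitistic dimensions satisfy fin dim_n Λ' ≤ fin dim_n Λ. -/

import Mathlib

universe u v

open Module

section Core

variable (R : Type u) [Ring R]

/-- The Jacobson radical of a ring, as a (left) ideal. -/
noncomputable def ringJac : Ideal R := (⊥ : Ideal R).jacobson

/-- `π : P → N` is a projective cover: `P` is projective, `π` is surjective and
its kernel is superfluous, i.e. contained in `rad(R)·P`. -/
def IsProjCover {P : Type v} {N : Type v} [AddCommGroup P] [Module R P]
    [AddCommGroup N] [Module R N] (π : P →ₗ[R] N) : Prop :=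
  Function.Surjective π ∧ Module.Projective R P ∧
    LinearMap.ker π ≤ (ringJac R) • (⊤ : Submodule R P)

/-- `X` is a first syzygy of `N`, i.e. isomorphic to the kernel of a projective cover of `N`. -/
def IsSyz1 (N : Type v) [AddCommGroup N] [Module R N]
    (X : Type v) [AddCommGroup X] [Module R X] : Prop :=
  ∃ (P : Type v) (_ : AddCommGroup P) (_ : Module R P) (π : P →ₗ[R] N),
    IsProjCover R π ∧ Nonempty (X ≃ₗ[R] LinearMap.ker π)

/-- `X` is an `n`-th syzygy of `N` (computed via projective covers); `Ω⁰(N) = N`. -/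
def IsSyz (n : ℕ) (N : Type v) [AddCommGroup N] [Module R N]
    (X : Type v) [AddCommGroup X] [Module R X] : Prop :=
  ∃ (M : Fin (n+1) → Type v) (_ : ∀ i, AddCommGroup (M i)) (_ : ∀ i, Module R (M i)),
    Nonempty (M 0 ≃ₗ[R] N) ∧ Nonempty (M (Fin.last n) ≃ₗ[R] X) ∧
    ∀ i : Fin n, IsSyz1 R (M i.castSucc) (M i.succ)

/-- Projective dimension of a module, as an element of `ℕ∞`
(the least `n` such that a minimal `n`-th syzygy is projective; `⊤` if none exists). -/
noncomputable def pdim (M : Type v) [AddCommGroup M] [Module R M] : ℕ∞ :=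
  sInf {d : ℕ∞ | ∃ n : ℕ, d = n ∧ ∃ (X : Type v) (_ : AddCommGroup X) (_ : Module R X),
    IsSyz R n M X ∧ Module.Projective R X}

/-- The little finitistic dimension of `R`: the supremum of the finite projective
dimensions attained on finitely generated left `R`-modules. -/
noncomputable def findim : ℕ∞ :=
  sSup {d : ℕ∞ | ∃ (M : Type u) (_ : AddCommGroup M) (_ : Module R M),
    Module.Finite R M ∧ pdim R M = d ∧ d ≠ ⊤}

/-- The big finitistic dimension of `R`: the supremum of the finite projective
dimensions attained on arbitrary left `R`-modules. -/
noncomputable def bigFindim : ℕ∞ :=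
  sSup {d : ℕ∞ | ∃ (M : Type u) (_ : AddCommGroup M) (_ : Module R M),
    pdim R M = d ∧ d ≠ ⊤}

/-- A primitive idempotent: a nonzero idempotent which is not the sum of two nonzero
orthogonal idempotents. -/
def IsPrimitiveIdem (e : R) : Prop :=
  IsIdempotentElem e ∧ e ≠ 0 ∧
    ∀ f g : R, IsIdempotentElem f → IsIdempotentElem g → f * g = 0 → g * f = 0 →
      f + g = e → f = 0 ∨ g = 0

/-- The top `M/JM` of a module. -/
noncomputable def topQuot (M : Type v) [AddCommGroup M] [Module R M] : Type v :=
  M ⧸ ((ringJac R) • (⊤ : Submodule R M))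

noncomputable instance topQuotAddCommGroup (M : Type v) [AddCommGroup M] [Module R M] :
    AddCommGroup (topQuot R M) :=
  inferInstanceAs (AddCommGroup (M ⧸ ((ringJac R) • (⊤ : Submodule R M))))

noncomputable instance topQuotModule (M : Type v) [AddCommGroup M] [Module R M] :
    Module R (topQuot R M) :=
  inferInstanceAs (Module R (M ⧸ ((ringJac R) • (⊤ : Submodule R M))))

end Core

section AlgCore

variable (K : Type u) [Field K] (Λ : Type u) [Ring Λ] [Algebra K Λ]

/-- The `K`-dimension (rank) of `e·(M/JM)`: the multiplicity of the top of `M` at the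
idempotent `e`. -/
noncomputable def eTopRank (e : Λ) (M : Type v) [AddCommGroup M] [Module Λ M] : Cardinal :=
  let _ : Module K (topQuot Λ M) := Module.compHom _ (algebraMap K Λ)
  Module.rank K ↥(Submodule.span K (Set.range (fun x : topQuot Λ M => e • x)))

/-- The `n`-generated finitistic dimension of the `K`-algebra `Λ`: the supremum of the
finite projective dimensions attained on finitely generated left `Λ`-modules whose top
multiplicities are all at most `n`. -/
noncomputable def findimN (n : ℕ) : ℕ∞ :=
  sSup {d : ℕ∞ | ∃ (M : Type u) (_ : AddCommGroup M) (_ : Module Λ M),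
    Module.Finite Λ M ∧ pdim Λ M = d ∧ d ≠ ⊤ ∧
    ∀ e : Λ, IsPrimitiveIdem Λ e → eTopRank K Λ e M ≤ n}

end AlgCore

section CornerDefs

variable {Λ : Type u} [Ring Λ]

/-- The corner ring `eΛe` attached to an idempotent `e` of `Λ`. -/
def Corner (e : Λ) (_ : IsIdempotentElem e) : Type u := {x : Λ // e * x = x ∧ x * e = x}

namespace Corner

variable {e : Λ} {he : IsIdempotentElem e}

instance : Zero (Corner e he) := ⟨⟨0, by simp⟩⟩
instance : Add (Corner e he) :=
  ⟨fun x y => ⟨x.1 + y.1, by rw [mul_add, x.2.1, y.2.1], by rw [add_mul, x.2.2, y.2.2]⟩⟩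
instance : Neg (Corner e he) :=
  ⟨fun x => ⟨-x.1, by rw [mul_neg, x.2.1], by rw [neg_mul, x.2.2]⟩⟩
instance : Mul (Corner e he) :=
  ⟨fun x y => ⟨x.1 * y.1, by rw [← mul_assoc, x.2.1], by rw [mul_assoc, y.2.2]⟩⟩
instance : One (Corner e he) := ⟨⟨e, he, he⟩⟩

instance instRing : Ring (Corner e he) :=
  Ring.ofMinimalAxioms
    (fun a b c => Subtype.ext (add_assoc a.1 b.1 c.1))
    (fun a => Subtype.ext (zero_add a.1))
    (fun a => Subtype.ext (neg_add_cancel a.1))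
    (fun a b c => Subtype.ext (mul_assoc a.1 b.1 c.1))
    (fun a => Subtype.ext a.2.1)
    (fun a => Subtype.ext a.2.2)
    (fun a b c => Subtype.ext (mul_add a.1 b.1 c.1))
    (fun a b c => Subtype.ext (add_mul a.1 b.1 c.1))

variable (K : Type u) [CommSemiring K] [Algebra K Λ]

instance : SMul K (Corner e he) :=
  ⟨fun k x => ⟨k • x.1, by rw [mul_smul_comm, x.2.1], by rw [smul_mul_assoc, x.2.2]⟩⟩

instance instModule : Module K (Corner e he) where
  one_smul x := Subtype.ext (one_smul K x.1)
  mul_smul a b x := Subtype.ext (mul_smul a b x.1)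
  smul_zero a := Subtype.ext (smul_zero a)
  smul_add a x y := Subtype.ext (smul_add a x.1 y.1)
  add_smul a b x := Subtype.ext (add_smul a b x.1)
  zero_smul x := Subtype.ext (zero_smul K x.1)

instance instAlgebra : Algebra K (Corner e he) :=
  Algebra.ofModule (fun k x y => Subtype.ext (smul_mul_assoc k x.1 y.1))
    (fun k x y => Subtype.ext (mul_smul_comm k x.1 y.1))

end Corner

/-- The `e`-component `eN` of a left `Λ`-module `N`, as an additive subgroup. -/
def cptSubgroup (e : Λ) (N : Type v) [AddCommGroup N] [Module Λ N] : AddSubgroup N where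
  carrier := {n | e • n = n}
  add_mem' := fun {a b} ha hb => by
    simp only [Set.mem_setOf_eq] at *; rw [smul_add, ha, hb]
  zero_mem' := smul_zero e
  neg_mem' := fun {a} ha => by
    simp only [Set.mem_setOf_eq] at *; rw [smul_neg, ha]

/-- The `e`-component `eN` of a left `Λ`-module `N`, as a type. -/
def Cpt (e : Λ) (N : Type v) [AddCommGroup N] [Module Λ N] : Type v := ↥(cptSubgroup e N)

instance (e : Λ) (N : Type v) [AddCommGroup N] [Module Λ N] : AddCommGroup (Cpt e N) :=
  inferInstanceAs (AddCommGroup ↥(cptSubgroup e N))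

instance {e : Λ} {he : IsIdempotentElem e} (N : Type v) [AddCommGroup N] [Module Λ N] :
    SMul (Corner e he) (Cpt e N) :=
  ⟨fun a n => ⟨a.1 • n.1, by show e • (a.1 • n.1) = a.1 • n.1; rw [smul_smul, a.2.1]⟩⟩

/-- `eN` is a left module over the corner ring `eΛe`. -/
instance cptModule {e : Λ} {he : IsIdempotentElem e} (N : Type v) [AddCommGroup N]
    [Module Λ N] : Module (Corner e he) (Cpt e N) where
  one_smul n := Subtype.ext (show e • n.1 = n.1 from n.2)
  mul_smul a b n := Subtype.ext (mul_smul a.1 b.1 n.1)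
  smul_zero a := Subtype.ext (smul_zero a.1)
  smul_add a x y := Subtype.ext (smul_add a.1 x.1 y.1)
  add_smul a b n := Subtype.ext (add_smul a.1 b.1 n.1)
  zero_smul n := Subtype.ext (zero_smul Λ n.1)

/-- A `Λ`-linear map restricts to a `eΛe`-linear map on `e`-components. -/
def cptMap {e : Λ} {he : IsIdempotentElem e} {Q N : Type v} [AddCommGroup Q] [Module Λ Q]
    [AddCommGroup N] [Module Λ N] (g : Q →ₗ[Λ] N) :
    Cpt e Q →ₗ[Corner e he] Cpt e N where
  toFun q := ⟨g q.1, show e • g q.1 = g q.1 by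
    rw [← map_smul, show e • q.1 = q.1 from q.2]⟩
  map_add' x y := Subtype.ext (map_add g x.1 y.1)
  map_smul' a q := Subtype.ext (map_smul g a.1 q.1)

/-- Under condition (a), `a ↦ e'ae'` is a ring homomorphism `Λ → e'Λe'`; restriction of
scalars along it realizes every `Λ'`-module as a `Λ`-module on which `e''` acts as zero. -/
def cornerHom (e' e'' : Λ) (he' : IsIdempotentElem e') (hsum : e' + e'' = 1)
    (hA : ∀ x : Λ, e'' * x * e' = 0) : Λ →+* Corner e' he' where
  toFun a := ⟨e' * a * e', by rw [← mul_assoc, ← mul_assoc, he'], by rw [mul_assoc, he']⟩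
  map_one' := Subtype.ext (show e' * 1 * e' = e' by rw [mul_one]; exact he')
  map_zero' := Subtype.ext (show e' * 0 * e' = 0 by rw [mul_zero, zero_mul])
  map_add' a b := Subtype.ext
    (show e' * (a + b) * e' = e' * a * e' + e' * b * e' by rw [mul_add, add_mul])
  map_mul' a b := Subtype.ext (by
    have key : ∀ x : Λ, e' * x * e' = x * e' := fun x => by
      have h1 : (e' + e'') * (x * e') = x * e' := by rw [hsum, one_mul]
      have h2 : e'' * (x * e') = 0 := by rw [← mul_assoc, hA x]
      calc e' * x * e' = e' * (x * e') := by rw [mul_assoc]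
        _ = (e' + e'') * (x * e') - e'' * (x * e') := by
            rw [add_mul, add_sub_cancel_right]
        _ = x * e' := by rw [h1, h2, sub_zero]
    show e' * (a * b) * e' = e' * a * e' * (e' * b * e')
    rw [key (a * b), key a, key b, mul_assoc a e' (b * e'), ← mul_assoc e' b e', key b,
      ← mul_assoc])

end CornerDefs

section JacAux

variable {R : Type u} [Ring R]

theorem ringJac_def : ringJac R = (⊥ : Ideal R).jacobson := rfl

/-- A left inverse for `1 - z` when `z` is in the Jacobson radical. -/
theorem jac_left_inv {z : R} (hz : z ∈ ringJac R) : ∃ t : R, t * (1 - z) = 1 := by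
  obtain ⟨t, ht⟩ := Ideal.mem_jacobson_iff.1 hz (-1)
  rw [Ideal.mem_bot] at ht
  refine ⟨t, ?_⟩
  have : t * -1 * z + t - 1 = t * (1 - z) - 1 := by noncomm_ring
  rw [this] at ht
  linear_combination (norm := noncomm_ring) ht

theorem jac_mul_left {z : R} (hz : z ∈ ringJac R) (y : R) : y * z ∈ ringJac R :=
  Ideal.mul_mem_left _ y hz

theorem jac_mul_right {z : R} (hz : z ∈ ringJac R) (y : R) : z * y ∈ ringJac R := by
  exact (show z * y ∈ (⊥ : Ideal R).jacobson from Ideal.mul_mem_right y _ hz)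

/-- `1 - z` is a unit when `z` is in the Jacobson radical. -/
theorem jac_isUnit_one_sub {z : R} (hz : z ∈ ringJac R) : IsUnit (1 - z) := by
  obtain ⟨t, ht⟩ := jac_left_inv hz
  have htz : t = 1 + t * z := by linear_combination (norm := noncomm_ring) ht
  obtain ⟨r, hr⟩ : ∃ r : R, r * t = 1 := by
    obtain ⟨r, hr⟩ := jac_left_inv (z := -(t * z)) (neg_mem (jac_mul_left hz t))
    refine ⟨r, ?_⟩
    rw [sub_neg_eq_add, ← htz] at hr
    exact hr
  have hrt : r = 1 - z := by
    calc r = r * (t * (1 - z)) := by rw [ht, mul_one]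
    _ = (r * t) * (1 - z) := by rw [mul_assoc]
    _ = 1 - z := by rw [hr, one_mul]
  exact ⟨⟨1 - z, t, by rw [← hrt] at ht ⊢; rw [hrt] at hr ⊢; exact hr, ht⟩, rfl⟩

theorem mem_jac_of_unit {x : R} (h : ∀ y : R, IsUnit (1 - y * x)) : x ∈ ringJac R := by
  refine Ideal.mem_jacobson_iff.2 fun y => ?_
  obtain ⟨u, hu⟩ := (h (-y)).exists_left_inv
  refine ⟨u, ?_⟩
  rw [Ideal.mem_bot]
  linear_combination (norm := noncomm_ring) hu

end JacAux

section NakAux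

variable {Λ : Type u} [Ring Λ]

theorem jac_smul_coeff {S : Finset Λ} {y : Λ}
    (hy : y ∈ (ringJac Λ) • (Submodule.span Λ (S : Set Λ))) :
    ∃ c : Λ → Λ, (∀ a, c a ∈ ringJac Λ) ∧ y = ∑ a ∈ S, c a * a := by
  classical
  refine Submodule.smul_induction_on hy ?_ ?_
  · intro r hr n hn
    obtain ⟨f, -, hf⟩ := Submodule.mem_span_finset.1 hn
    refine ⟨fun a => r * f a, fun a => jac_mul_right hr (f a), ?_⟩
    have : r • n = r * n := rfl
    rw [this, ← hf, Finset.mul_sum]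
    refine Finset.sum_congr rfl fun a _ => ?_
    rw [smul_eq_mul, mul_assoc]
  · rintro x y ⟨c₁, hc₁, rfl⟩ ⟨c₂, hc₂, rfl⟩
    exact ⟨fun a => c₁ a + c₂ a, fun a => add_mem (hc₁ a) (hc₂ a), by
      rw [← Finset.sum_add_distrib]
      exact Finset.sum_congr rfl fun a _ => (add_mul _ _ _).symm⟩

/-- Noncommutative Nakayama for finitely generated left ideals. -/
theorem nak_fg : ∀ (k : ℕ) (S : Finset Λ), S.card ≤ k →
    Submodule.span Λ (S : Set Λ) ≤ (ringJac Λ) • Submodule.span Λ (S : Set Λ) →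
    Submodule.span Λ (S : Set Λ) = ⊥ := by
  classical
  intro k
  induction k with
  | zero =>
    intro S hS _
    rw [Nat.le_zero, Finset.card_eq_zero] at hS
    subst hS
    simp
  | succ k ih =>
    intro S hS hle
    rcases S.eq_empty_or_nonempty with rfl | ⟨x, hx⟩
    · simp
    obtain ⟨c, hc, hrep⟩ := jac_smul_coeff (hle (Submodule.subset_span hx))
    have hsplit : x = c x * x + ∑ a ∈ S.erase x, c a * a := by
      conv_lhs => rw [hrep]
      exact (Finset.add_sum_erase S (fun a => c a * a) hx).symm
    have hu := jac_isUnit_one_sub (hc x)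
    obtain ⟨u, hu⟩ := hu
    have hxmem : x ∈ Submodule.span Λ ((S.erase x : Finset Λ) : Set Λ) := by
      have h1 : (1 - c x) * x = ∑ a ∈ S.erase x, c a * a := by
        rw [sub_mul, one_mul]
        linear_combination (norm := noncomm_ring) hsplit
      have h2 : x = ↑u⁻¹ * ∑ a ∈ S.erase x, c a * a := by
        rw [← h1, ← hu, ← mul_assoc, Units.inv_mul, one_mul]
      have h3 : (↑u⁻¹ : Λ) * ∑ a ∈ S.erase x, c a * a
          ∈ Submodule.span Λ ((S.erase x : Finset Λ) : Set Λ) := by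
        rw [Finset.mul_sum]
        refine Submodule.sum_mem _ fun a ha => ?_
        rw [← mul_assoc]
        exact Submodule.smul_mem _ _ (Submodule.subset_span ha)
      rw [← h2] at h3
      exact h3
    have hspan : Submodule.span Λ ((S.erase x : Finset Λ) : Set Λ)
        = Submodule.span Λ (S : Set Λ) := by
      refine le_antisymm (Submodule.span_mono fun a ha => (Finset.mem_erase.1 ha).2) ?_
      refine Submodule.span_le.2 fun a ha => ?_
      rcases eq_or_ne a x with rfl | hax
      · exact hxmem
      · exact Submodule.subset_span (Finset.mem_erase.2 ⟨hax, ha⟩)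
    have hcard : (S.erase x).card ≤ k := by
      have := Finset.card_erase_lt_of_mem hx
      omega
    have := ih (S.erase x) hcard (by rw [hspan]; exact hle)
    rw [← hspan, this]

theorem smul_smul_le {N : Type v} [AddCommGroup N] [Module Λ N]
    (I Q : Ideal Λ) (W : Submodule Λ N) : I • (Q • W) ≤ (I • Q) • W := by
  refine Submodule.smul_le.2 fun r hr n hn => ?_
  refine Submodule.smul_induction_on hn ?_ ?_
  · intro q hq w hw
    rw [← mul_smul]
    exact Submodule.smul_mem_smul (Submodule.smul_mem_smul hr hq) hw
  · intro x y hx hy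
    rw [smul_add]
    exact add_mem hx hy

variable (K : Type u) [Field K] [Algebra K Λ] [FiniteDimensional K Λ]

include K in
/-- If `W ≤ J • W` for a submodule of a module over a finite-dimensional algebra, then `W = 0`. -/
theorem jac_smul_eq_bot {N : Type v} [AddCommGroup N] [Module Λ N]
    (W : Submodule Λ N) (hW : W ≤ (ringJac Λ) • W) : W = ⊥ := by
  haveI : IsArtinianRing Λ := isArtinian_of_tower K inferInstance
  haveI : IsNoetherian Λ Λ := isNoetherian_of_tower K inferInstance
  set jp : ℕ → Ideal Λ := fun k => Nat.recAux ⊤ (fun _ I => ringJac Λ • I) k with hjp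
  have hjpsucc : ∀ k, jp (k + 1) = ringJac Λ • jp k := fun k => rfl
  have hdec : ∀ k, jp (k + 1) ≤ jp k := by
    intro k
    induction k with
    | zero => exact le_top
    | succ k ih => rw [hjpsucc, hjpsucc]; exact Submodule.smul_mono le_rfl ih
  have hmono : ∀ a b : ℕ, a ≤ b → jp b ≤ jp a := by
    intro a b hab
    induction hab with
    | refl => exact le_rfl
    | step _ ih => exact le_trans (hdec _) ih
  obtain ⟨m, hm⟩ := IsArtinian.monotone_stabilizes
    (⟨fun k => OrderDual.toDual (jp k), fun a b hab => hmono a b hab⟩ : ℕ →o (Ideal Λ)ᵒᵈ)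
  have hstab : jp m = ringJac Λ • jp m := by
    have := hm (m + 1) (Nat.le_succ m)
    exact congrArg OrderDual.ofDual this
  have hbot : jp m = ⊥ := by
    obtain ⟨S, hS⟩ := IsNoetherian.noetherian (jp m)
    rw [← hS]
    exact nak_fg S.card S le_rfl (by rw [hS]; exact le_of_eq hstab)
  have hWk : ∀ k, W ≤ jp k • W := by
    intro k
    induction k with
    | zero => rw [show jp 0 = ⊤ from rfl, Submodule.top_smul]
    | succ k ih =>
      refine le_trans hW (le_trans (Submodule.smul_mono le_rfl ih) ?_)
      rw [hjpsucc]
      exact smul_smul_le _ _ _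
  have := hWk m
  rw [hbot, Submodule.bot_smul, le_bot_iff] at this
  exact this

end NakAux

section UnitComm

variable {R : Type u} [Ring R]

theorem isUnit_one_sub_comm {a b : R} (h : IsUnit (1 - a * b)) : IsUnit (1 - b * a) := by
  obtain ⟨u, hu⟩ := h
  have ht1 : (1 - a * b) * ↑u⁻¹ = 1 := by rw [← hu, Units.mul_inv]
  have ht2 : (↑u⁻¹ : R) * (1 - a * b) = 1 := by rw [← hu, Units.inv_mul]
  set t := (↑u⁻¹ : R)
  have key1 : (1 - b * a) * (1 + b * t * a) = 1 + b * ((1 - a * b) * t) * a - b * a := by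
    noncomm_ring
  have key2 : (1 + b * t * a) * (1 - b * a) = 1 + b * (t * (1 - a * b)) * a - b * a := by
    noncomm_ring
  rw [ht1, mul_one, add_sub_cancel_right] at key1
  rw [ht2, mul_one, add_sub_cancel_right] at key2
  exact ⟨⟨1 - b * a, 1 + b * t * a, key1, key2⟩, rfl⟩

end UnitComm

section CornerAux

variable {Λ : Type u} [Ring Λ] (e' e'' : Λ) (he' : IsIdempotentElem e')
  (he'' : IsIdempotentElem e'') (hsum : e' + e'' = 1) (hA : ∀ x : Λ, e'' * x * e' = 0)

local notation "R'" => Corner e' he'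
local notation "ρ" => cornerHom e' e'' he' hsum hA

include he' hsum in
theorem ee'₁ : e' * e'' = 0 := by
  have h : e'' = 1 - e' := by rw [← hsum]; abel
  rw [h, mul_sub, mul_one, he', sub_self]

include he' hsum in
theorem ee'₂ : e'' * e' = 0 := by
  have h : e'' = 1 - e' := by rw [← hsum]; abel
  rw [h, sub_mul, one_mul, he', sub_self]

include hsum hA in
theorem mule' (y : Λ) : e' * (y * e') = y * e' := by
  have h2 : e'' * (y * e') = 0 := by rw [← mul_assoc]; exact hA y
  have h3 : (e' + e'') * (y * e') = y * e' := by rw [hsum, one_mul]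
  rw [add_mul, h2, add_zero] at h3
  exact h3

theorem corner_val_mul (x y : R') : (x * y).1 = x.1 * y.1 := rfl
theorem corner_val_one : (1 : R').1 = e' := rfl
theorem corner_val_zero : (0 : R').1 = 0 := rfl
theorem corner_val_add (x y : R') : (x + y).1 = x.1 + y.1 := rfl
theorem corner_val_neg (x : R') : (-x).1 = -x.1 := rfl
theorem corner_val_sub (x y : R') : (x - y).1 = x.1 - y.1 := by
  show (x + -y).1 = _
  rw [corner_val_add, corner_val_neg, sub_eq_add_neg]

theorem cHom_val (a : Λ) : (ρ a).1 = e' * a * e' := rfl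

theorem cHom_corner (x : R') : ρ x.1 = x := by
  refine Subtype.ext ?_
  rw [cHom_val, x.2.1, x.2.2]

include he' hsum in
theorem cHom_e'' : (ρ e'').1 = 0 := by
  rw [cHom_val, ee'₁ e' e'' he' hsum, zero_mul]

include hsum hA in
theorem corner_absorb (a : Λ) (v : Λ) (hv1 : e' * v = v) (hv2 : v * e' = v) :
    e' * a * e' * v = a * v := by
  have h1 : a * v = (a * v) * e' := by rw [mul_assoc, hv2]
  have h2 : e' * ((a * v) * e') = (a * v) * e' := mule' e' e'' hsum hA (a * v)
  calc e' * a * e' * v = (e' * a) * (e' * v) := mul_assoc _ _ _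
    _ = (e' * a) * v := by rw [hv1]
    _ = e' * (a * v) := mul_assoc _ _ _
    _ = a * v := by rw [h1]; exact h2

/-- Transfer a unit of `Λ` of the form `1 - w` (with `w` in the corner) to a corner unit. -/
theorem corner_unit {w : R'} (hw : IsUnit ((1 : Λ) - w.1)) : IsUnit (1 - w) := by
  obtain ⟨u, hu⟩ := hw
  have ht1 : (1 - w.1) * ↑u⁻¹ = 1 := by rw [← hu, Units.mul_inv]
  have ht2 : (↑u⁻¹ : Λ) * (1 - w.1) = 1 := by rw [← hu, Units.inv_mul]
  set t := (↑u⁻¹ : Λ) with htdef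
  set a := w.1 with hadef
  have ha1 : e' * a = a := w.2.1
  have ha2 : a * e' = a := w.2.2
  have hval : (1 - w).1 = e' - a := by
    rw [corner_val_sub]; rfl
  have hmem1 : e' * (e' * t * e') = e' * t * e' := by
    rw [← mul_assoc, ← mul_assoc, he']
  have hmem2 : (e' * t * e') * e' = e' * t * e' := by
    rw [mul_assoc, mul_assoc, he', ← mul_assoc]
  set v : R' := ⟨e' * t * e', hmem1, hmem2⟩ with hvdef
  have hstep1 : (e' - a) * e' = e' - a := by rw [sub_mul, he', ha2]
  have hstep2 : e' - a = e' * (1 - a) := by rw [mul_sub, mul_one, ha1]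
  have hstep3 : e' - a = (1 - a) * e' := by rw [sub_mul, one_mul, ha2]
  have hstep4 : e' * (e' - a) = e' - a := by rw [mul_sub, he', ha1]
  have key1 : (e' - a) * (e' * t * e') = e' := by
    calc (e' - a) * (e' * t * e') = ((e' - a) * e') * (t * e') := by
          rw [mul_assoc, mul_assoc]
      _ = (e' * (1 - a)) * (t * e') := by rw [hstep1, ← hstep2]
      _ = e' * (((1 - a) * t) * e') := by rw [mul_assoc, mul_assoc]
      _ = e' := by rw [ht1, one_mul, he']
  have key2 : (e' * t * e') * (e' - a) = e' := by
    calc (e' * t * e') * (e' - a) = (e' * t) * (e' * (e' - a)) := by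
          rw [mul_assoc]
      _ = (e' * t) * ((1 - a) * e') := by rw [hstep4, hstep3]
      _ = e' * ((t * (1 - a)) * e') := by rw [mul_assoc, mul_assoc]
      _ = e' := by rw [ht2, one_mul, he']
  refine ⟨⟨1 - w, v, ?_, ?_⟩, rfl⟩
  · exact Subtype.ext (by rw [corner_val_mul, hval]; exact key1)
  · exact Subtype.ext (by rw [corner_val_mul, hval]; exact key2)

/-- Transfer a corner unit of the form `1 - w` to a unit of `Λ`. -/
theorem corner_unit_lift {w : R'} (hw : IsUnit (1 - w)) : IsUnit ((1 : Λ) - w.1) := by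
  obtain ⟨u, hu⟩ := hw
  have ht1 : (1 - w) * u⁻¹ = 1 := by rw [← hu, Units.mul_inv]
  have ht2 : (u⁻¹ : R'ˣ).1 * (1 - w) = 1 := by rw [← hu, Units.inv_mul]
  set v : R' := (u⁻¹ : R'ˣ).1 with hvdef
  set a := w.1 with hadef
  have ha1 : e' * a = a := w.2.1
  have ha2 : a * e' = a := w.2.2
  have hv1 : e' * v.1 = v.1 := v.2.1
  have hv2 : v.1 * e' = v.1 := v.2.2
  have hval : (1 - w).1 = e' - a := by rw [corner_val_sub]; rfl
  have key1 : (e' - a) * v.1 = e' := by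
    have := congrArg Subtype.val ht1
    rw [corner_val_mul, hval] at this
    exact this
  have key2 : v.1 * (e' - a) = e' := by
    have := congrArg Subtype.val ht2
    rw [corner_val_mul, hval] at this
    exact this
  -- inverse of `1 - a` is `1 - e' + v`
  refine ⟨⟨1 - a, 1 - e' + v.1, ?_, ?_⟩, rfl⟩
  · -- (1 - a) * (1 - e' + v) = 1
    have expand : (1 - a) * (1 - e' + v.1)
        = 1 - e' + v.1 - a + a * e' - a * v.1 := by noncomm_ring
    rw [expand, ha2]
    have hev : v.1 - a * v.1 = e' := by
      have : (e' - a) * v.1 = e' * v.1 - a * v.1 := by rw [sub_mul]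
      rw [this, hv1] at key1
      exact key1
    linear_combination (norm := abel) hev
  · -- (1 - e' + v) * (1 - a) = 1
    have expand : (1 - e' + v.1) * (1 - a)
        = 1 - a - e' + e' * a + v.1 - v.1 * a := by noncomm_ring
    rw [expand, ha1]
    have hev : v.1 - v.1 * a = e' := by
      have : v.1 * (e' - a) = v.1 * e' - v.1 * a := by rw [mul_sub]
      rw [this, hv2] at key2
      exact key2
    linear_combination (norm := abel) hev

include hsum hA in
theorem corner_jac_le {x : R'} (hx : x ∈ ringJac R') : x.1 ∈ ringJac Λ := by
  refine mem_jac_of_unit fun y => ?_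
  have h1 : y * x.1 = (y * e') * x.1 := by
    rw [mul_assoc, x.2.1]
  have hz1 : e' * (x.1 * (y * e')) = x.1 * (y * e') := by
    rw [← mul_assoc, x.2.1]
  have hz2 : (x.1 * (y * e')) * e' = x.1 * (y * e') := by
    rw [mul_assoc, mul_assoc, he', ← mul_assoc]
  set z : R' := ⟨x.1 * (y * e'), hz1, hz2⟩ with hzdef
  have hzmem : z ∈ ringJac R' := by
    have hz : z = x * ρ y := by
      refine Subtype.ext ?_
      rw [corner_val_mul, cHom_val]
      show x.1 * (y * e') = x.1 * (e' * y * e')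
      rw [mul_assoc e' y e', ← mul_assoc x.1 e' (y * e'), x.2.2]
    rw [hz]
    exact jac_mul_right hx (ρ y)
  have hunit : IsUnit ((1 : Λ) - z.1) :=
    corner_unit_lift e' he' (jac_isUnit_one_sub hzmem)
  have hcomm : IsUnit (1 - (y * e') * x.1) := isUnit_one_sub_comm hunit
  rw [h1]
  exact hcomm

include hsum hA in
theorem jac_cHom_mem {j : Λ} (hj : j ∈ ringJac Λ) : ρ j ∈ ringJac R' := by
  refine mem_jac_of_unit fun y => ?_
  have hmem : (y * ρ j).1 ∈ ringJac Λ := by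
    rw [corner_val_mul, cHom_val]
    exact jac_mul_left (jac_mul_right (jac_mul_left hj e') e') y.1
  exact corner_unit e' he' (jac_isUnit_one_sub hmem)

include he' hsum in
theorem cHom_e''_eq : ρ e'' = (0 : R') :=
  Subtype.ext (cHom_e'' e' e'' he' hsum hA)

/-- Restriction of scalars along `cornerHom`: a `Λ`-module structure on an `e'Λe'`-module. -/
def lmod (M : Type v) [AddCommGroup M] [Module R' M] : Module Λ M :=
  { smul := fun a x => ρ a • x
    one_smul := fun x => by show ρ 1 • x = x; rw [map_one, one_smul]
    mul_smul := fun a b x => by show ρ (a * b) • x = ρ a • ρ b • x; rw [map_mul, mul_smul]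
    smul_zero := fun a => smul_zero (ρ a)
    smul_add := fun a x y => smul_add (ρ a) x y
    add_smul := fun a b x => by show ρ (a + b) • x = ρ a • x + ρ b • x; rw [map_add, add_smul]
    zero_smul := fun x => by show ρ 0 • x = 0; rw [map_zero, zero_smul] }

include hsum in
theorem killed_e'_smul {N : Type v} [AddCommGroup N] [Module Λ N]
    (hk : ∀ x : N, e'' • x = 0) (x : N) : e' • x = x := by
  have h := one_smul Λ x
  rw [show (1 : Λ) = e' + e'' from hsum.symm, add_smul, hk, add_zero] at h
  exact h

include hsum in
theorem killed_smul {N : Type v} [AddCommGroup N] [Module Λ N]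
    (hk : ∀ x : N, e'' • x = 0) (a : Λ) (x : N) : a • x = (e' * a * e') • x := by
  have h1 : e' • x = x := killed_e'_smul e' e'' hsum hk x
  calc a • x = a • (e' • x) := by rw [h1]
    _ = (a * e') • x := (mul_smul a e' x).symm
    _ = e' • ((a * e') • x) := (killed_e'_smul e' e'' hsum hk ((a * e') • x)).symm
    _ = (e' * (a * e')) • x := (mul_smul e' (a * e') x).symm
    _ = (e' * a * e') • x := by rw [mul_assoc]

/-- An `e'Λe'`-module structure on a `Λ`-module killed by `e''`. -/
def rmod (N : Type v) [AddCommGroup N] [Module Λ N] (hk : ∀ x : N, e'' • x = 0) :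
    Module R' N :=
  { smul := fun a x => a.1 • x
    one_smul := fun x => killed_e'_smul e' e'' hsum hk x
    mul_smul := fun a b x => by
      show (a.1 * b.1) • x = a.1 • b.1 • x; rw [mul_smul]
    smul_zero := fun a => smul_zero a.1
    smul_add := fun a x y => smul_add a.1 x y
    add_smul := fun a b x => by
      show (a.1 + b.1) • x = a.1 • x + b.1 • x; rw [add_smul]
    zero_smul := fun x => by show (0 : Λ) • x = 0; rw [zero_smul] }

theorem lmod_killed (M : Type v) [AddCommGroup M] [inst : Module R' M] (x : M) :
    (let _ := lmod e' e'' he' hsum hA M; e'' • x) = 0 := by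
  show ρ e'' • x = 0
  rw [cHom_e''_eq e' e'' he' hsum, zero_smul]

include he'' hA in
theorem projective_lmod (P : Type v) [AddCommGroup P] [inst : Module R' P]
    (hp : Module.Projective R' P) :
    @Module.Projective Λ _ P _ (lmod e' e'' he' hsum hA P) := by
  letI := lmod e' e'' he' hsum hA P
  obtain ⟨s0, hs0⟩ := Module.projective_def.1 hp
  refine Module.projective_def.2
    ⟨{ toFun := fun p => Finsupp.mapRange (fun b : R' => b.1) rfl (s0 p),
       map_add' := fun x y => by
         show Finsupp.mapRange (fun b : R' => b.1) rfl (s0 (x + y))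
           = Finsupp.mapRange (fun b : R' => b.1) rfl (s0 x)
             + Finsupp.mapRange (fun b : R' => b.1) rfl (s0 y)
         rw [map_add]
         exact Finsupp.mapRange_add (fun a b => rfl) _ _,
       map_smul' := fun a x => ?_ }, fun p => ?_⟩
  · show Finsupp.mapRange (fun b : R' => b.1) rfl (s0 (ρ a • x))
      = a • Finsupp.mapRange (fun b : R' => b.1) rfl (s0 x)
    rw [map_smul]
    ext q
    rw [Finsupp.mapRange_apply, Finsupp.smul_apply, Finsupp.smul_apply, Finsupp.mapRange_apply]
    show (ρ a * (s0 x) q).1 = a * ((s0 x) q).1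
    rw [corner_val_mul, cHom_val]
    exact corner_absorb e' e'' hsum hA a ((s0 x) q).1 ((s0 x) q).2.1 ((s0 x) q).2.2
  · show (Finsupp.linearCombination Λ id) (Finsupp.mapRange (fun b : R' => b.1) rfl (s0 p)) = p
    rw [Finsupp.linearCombination_apply]
    rw [Finsupp.sum_mapRange_index (fun i => zero_smul Λ (id i))]
    have hcongr : ((s0 p).sum fun i (b : R') => b.1 • (id i : P))
        = ((s0 p).sum fun i (b : R') => b • (id i : P)) := by
      refine Finsupp.sum_congr fun i _ => ?_
      show ρ ((s0 p) i).1 • (id i : P) = ((s0 p) i) • (id i : P)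
      rw [cHom_corner]
    rw [hcongr]
    exact hs0 p

include hA in
theorem projective_rmod (P : Type v) [AddCommGroup P] [instP : Module Λ P]
    (hk : ∀ x : P, e'' • x = 0) (hp : Module.Projective Λ P) :
    @Module.Projective R' _ P _ (rmod e' e'' he' hsum P hk) := by
  letI instR := rmod e' e'' he' hsum P hk
  letI instF : Module Λ (P →₀ R') := lmod e' e'' he' hsum hA (P →₀ R')
  have hsurj : Function.Surjective (Finsupp.linearCombination R' (id : P → P)) := by
    intro p
    refine ⟨Finsupp.single p 1, ?_⟩
    rw [Finsupp.linearCombination_single, one_smul]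
    rfl
  let T : (P →₀ R') →ₗ[Λ] P :=
    { toFun := Finsupp.linearCombination R' (id : P → P)
      map_add' := fun x y => map_add _ x y
      map_smul' := fun a f => by
        show (Finsupp.linearCombination R' (id : P → P)) (ρ a • f)
          = a • (Finsupp.linearCombination R' (id : P → P)) f
        rw [map_smul]
        show (ρ a).1 • (Finsupp.linearCombination R' (id : P → P)) f
          = a • (Finsupp.linearCombination R' (id : P → P)) f
        rw [cHom_val]
        exact (killed_smul e' e'' hsum hk a _).symm }
  obtain ⟨h, hh⟩ := Module.projective_lifting_property T LinearMap.id
    (by intro p; obtain ⟨f, hf⟩ := hsurj p; exact ⟨f, hf⟩)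
  refine Module.projective_def.2
    ⟨{ toFun := h, map_add' := h.map_add, map_smul' := fun a x => ?_ }, fun p => ?_⟩
  · show h (a.1 • x) = a • h x
    have h2 := h.map_smul a.1 x
    rw [h2]
    show ρ a.1 • h x = a • h x
    rw [cHom_corner]
  · show (Finsupp.linearCombination R' (id : P → P)) (h p) = p
    exact congrArg (fun g : P →ₗ[Λ] P => g p) hh

include hsum in
theorem killed_of_lequiv {X Y : Type v} [AddCommGroup X] [Module Λ X] [AddCommGroup Y]
    [Module Λ Y] (f : X ≃ₗ[Λ] Y) (hk : ∀ x : X, e'' • x = 0) : ∀ y : Y, e'' • y = 0 := by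
  intro y
  have h1 : e'' • f.symm y = 0 := hk _
  have h2 := congrArg f h1
  rw [map_smul, f.apply_symm_apply, map_zero] at h2
  exact h2

include he'' hsum hA in
theorem killed_of_cover (K : Type u) [Field K] [Algebra K Λ] [FiniteDimensional K Λ]
    {P N : Type u} [AddCommGroup P] [Module Λ P] [AddCommGroup N] [Module Λ N]
    (π : P →ₗ[Λ] N) (hker : LinearMap.ker π ≤ (ringJac Λ) • (⊤ : Submodule Λ P))
    (hkN : ∀ x : N, e'' • x = 0) : ∀ p : P, e'' • p = 0 := by
  classical
  set W : Submodule Λ P := Submodule.span Λ (Set.range fun p : P => e'' • p) with hW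
  have hstep : ∀ y ∈ (ringJac Λ) • (⊤ : Submodule Λ P), e'' • y ∈ (ringJac Λ) • W := by
    intro y hy
    refine Submodule.smul_induction_on hy ?_ ?_
    · intro j hj q _
      have h1 : e'' • (j • q) = (e'' * j) • q := (mul_smul e'' j q).symm
      have h2 : (e'' * j) * e'' = e'' * j := by
        have h3 : (e'' * j) * (e' + e'') = e'' * j := by rw [hsum, mul_one]
        rw [mul_add, show e'' * j * e' = 0 from hA j, zero_add] at h3
        exact h3
      have h5 : e'' • (j • q) = ((e'' * j) * e'') • q := by rw [h1, h2]
      have h6 : ((e'' * j) * e'') • q = (e'' * j) • (e'' • q) := mul_smul _ _ _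
      rw [h5, h6]
      exact Submodule.smul_mem_smul (jac_mul_left hj e'')
        (Submodule.subset_span ⟨q, rfl⟩)
    · intro x y hx hy'
      rw [smul_add]
      exact add_mem hx hy'
  have hWle : W ≤ (ringJac Λ) • W := by
    refine Submodule.span_le.2 ?_
    rintro _ ⟨p, rfl⟩
    have hkerp : e'' • p ∈ LinearMap.ker π := by
      rw [LinearMap.mem_ker, map_smul]
      exact hkN (π p)
    have hst := hstep (e'' • p) (hker hkerp)
    rwa [← mul_smul, he''] at hst
  have hbot := jac_smul_eq_bot K W hWle
  intro p
  have hmem : e'' • p ∈ W := Submodule.subset_span ⟨p, rfl⟩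
  rw [hbot] at hmem
  exact hmem

include he'' hA in
theorem isSyz1_lmod (N X : Type u) [AddCommGroup N] [iN : Module R' N]
    [AddCommGroup X] [iX : Module R' X] (h : IsSyz1 R' N X) :
    @IsSyz1 Λ _ N _ (lmod e' e'' he' hsum hA N) X _ (lmod e' e'' he' hsum hA X) := by
  obtain ⟨P, iPa, iPm, π, ⟨hsurj, hproj, hker⟩, ⟨g⟩⟩ := h
  letI := iPa; letI := iPm
  letI instPΛ := lmod e' e'' he' hsum hA P
  letI instNΛ := lmod e' e'' he' hsum hA N
  letI instXΛ := lmod e' e'' he' hsum hA X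
  refine ⟨P, inferInstance, instPΛ,
    { toFun := π, map_add' := π.map_add,
      map_smul' := fun a x => by show π (ρ a • x) = ρ a • π x; exact π.map_smul _ _ },
    ⟨?_, ?_, ?_⟩, ⟨?_⟩⟩
  · intro y
    obtain ⟨p, hp⟩ := hsurj y
    exact ⟨p, hp⟩
  · exact projective_lmod e' e'' he' he'' hsum hA P hproj
  · intro x hx
    have hx' : x ∈ LinearMap.ker π := hx
    have h2 := hker hx'
    refine Submodule.smul_induction_on h2 ?_ ?_
    · intro a ha q _
      have mem := Submodule.smul_mem_smul
        (corner_jac_le e' e'' he' hsum hA ha) (Submodule.mem_top (x := q))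
      have key : (a.1 : Λ) • q = a • q := by
        show ρ a.1 • q = a • q
        rw [cHom_corner]
      rw [key] at mem
      exact mem
    · intro u v hu hv
      exact add_mem hu hv
  · -- the linear equivalence with the kernel
    refine
      { toFun := fun x => ⟨(g x).1, (g x).2⟩
        invFun := fun y => g.symm ⟨y.1, y.2⟩
        left_inv := fun x => by
          show g.symm ⟨(g x).1, _⟩ = x
          exact g.symm_apply_apply x
        right_inv := fun y =>
          Subtype.ext (congrArg Subtype.val (g.apply_symm_apply ⟨y.1, y.2⟩))
        map_add' := fun x y => Subtype.ext (by
          show (g (x + y)).1 = (g x).1 + (g y).1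
          rw [map_add]; rfl)
        map_smul' := fun a x => Subtype.ext (by
          show (g (ρ a • x)).1 = ρ a • (g x).1
          rw [g.map_smul]; rfl) }

include he'' hA in
theorem isSyz1_rmod (K : Type u) [Field K] [Algebra K Λ] [FiniteDimensional K Λ]
    (N X : Type u) [AddCommGroup N] [iN : Module Λ N] [AddCommGroup X] [iX : Module Λ X]
    (hkN : ∀ x : N, e'' • x = 0) (h : IsSyz1 Λ N X) :
    ∃ hkX : ∀ x : X, e'' • x = 0,
      @IsSyz1 R' _ N _ (rmod e' e'' he' hsum N hkN) X _ (rmod e' e'' he' hsum X hkX) := by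
  obtain ⟨P, iPa, iPm, π, ⟨hsurj, hproj, hker⟩, ⟨g⟩⟩ := h
  letI := iPa; letI := iPm
  have hkP : ∀ p : P, e'' • p = 0 :=
    killed_of_cover e' e'' he'' hsum hA K π hker hkN
  have hkker : ∀ y : ↥(LinearMap.ker π), e'' • y = 0 := by
    intro y
    refine Subtype.ext ?_
    show e'' • y.1 = 0
    exact hkP y.1
  have hkX : ∀ x : X, e'' • x = 0 := killed_of_lequiv e' e'' hsum g.symm hkker
  letI instPR : Module R' P := rmod e' e'' he' hsum P hkP
  letI instNR : Module R' N := rmod e' e'' he' hsum N hkN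
  letI instXR : Module R' X := rmod e' e'' he' hsum X hkX
  refine ⟨hkX, P, inferInstance, instPR,
    { toFun := π, map_add' := π.map_add,
      map_smul' := fun a x => by show π (a.1 • x) = a.1 • π x; exact π.map_smul a.1 x },
    ⟨?_, ?_, ?_⟩, ⟨?_⟩⟩
  · intro y
    obtain ⟨p, hp⟩ := hsurj y
    exact ⟨p, hp⟩
  · exact projective_rmod e' e'' he' hsum hA P hkP hproj
  · intro x hx
    have hx' : x ∈ LinearMap.ker π := hx
    have h2 := hker hx'
    refine Submodule.smul_induction_on h2 ?_ ?_
    · intro j hj q _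
      have mem := Submodule.smul_mem_smul
        (jac_cHom_mem e' e'' he' hsum hA hj) (Submodule.mem_top (x := q))
      have keyq : ρ j • q = j • q := by
        show (ρ j).1 • q = j • q
        rw [cHom_val]
        exact (killed_smul e' e'' hsum hkP j q).symm
      rw [← keyq]
      exact mem
    · intro u v hu hv
      exact add_mem hu hv
  · refine
      { toFun := fun x => ⟨(g x).1, (g x).2⟩
        invFun := fun y => g.symm ⟨y.1, y.2⟩
        left_inv := fun x => by
          show g.symm ⟨(g x).1, _⟩ = x
          exact g.symm_apply_apply x
        right_inv := fun y =>
          Subtype.ext (congrArg Subtype.val (g.apply_symm_apply ⟨y.1, y.2⟩))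
        map_add' := fun x y => Subtype.ext (by
          show (g (x + y)).1 = (g x).1 + (g y).1
          rw [map_add]; rfl)
        map_smul' := fun a x => Subtype.ext (by
          show (g (a.1 • x)).1 = a.1 • (g x).1
          rw [g.map_smul]; rfl) }

include he'' hA in
theorem isSyz_lmod (n : ℕ) (M X : Type u) [AddCommGroup M] [iM : Module R' M]
    [AddCommGroup X] [iX : Module R' X] (h : IsSyz R' n M X) :
    @IsSyz Λ _ n M _ (lmod e' e'' he' hsum hA M) X _ (lmod e' e'' he' hsum hA X) := by
  obtain ⟨Mc, iA, iMo, ⟨g0⟩, ⟨gl⟩, hstep⟩ := h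
  letI : ∀ i, AddCommGroup (Mc i) := iA
  letI : ∀ i, Module R' (Mc i) := iMo
  letI := lmod e' e'' he' hsum hA M
  letI := lmod e' e'' he' hsum hA X
  letI : ∀ i, Module Λ (Mc i) := fun i => lmod e' e'' he' hsum hA (Mc i)
  refine ⟨Mc, iA, fun i => lmod e' e'' he' hsum hA (Mc i), ⟨?_⟩, ⟨?_⟩, fun i => ?_⟩
  · exact
      { toFun := g0, invFun := g0.symm, left_inv := g0.left_inv, right_inv := g0.right_inv,
        map_add' := g0.map_add,
        map_smul' := fun a x => by
          show g0 (ρ a • x) = ρ a • g0 x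
          exact g0.map_smul (ρ a) x }
  · exact
      { toFun := gl, invFun := gl.symm, left_inv := gl.left_inv, right_inv := gl.right_inv,
        map_add' := gl.map_add,
        map_smul' := fun a x => by
          show gl (ρ a • x) = ρ a • gl x
          exact gl.map_smul (ρ a) x }
  · exact isSyz1_lmod e' e'' he' he'' hsum hA _ _ (hstep i)

include he'' hA in
theorem isSyz_rmod (K : Type u) [Field K] [Algebra K Λ] [FiniteDimensional K Λ] (n : ℕ)
    (M : Type u) [AddCommGroup M] [iM : Module R' M] (X : Type u) [AddCommGroup X]
    [iX : Module Λ X]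
    (h : @IsSyz Λ _ n M _ (lmod e' e'' he' hsum hA M) X _ iX) :
    ∃ hkX : ∀ x : X, e'' • x = 0,
      @IsSyz R' _ n M _ iM X _ (rmod e' e'' he' hsum X hkX) := by
  obtain ⟨Mc, iA, iMo, ⟨g0⟩, ⟨gl⟩, hstep⟩ := h
  letI : ∀ i, AddCommGroup (Mc i) := iA
  letI : ∀ i, Module Λ (Mc i) := iMo
  letI instMΛ := lmod e' e'' he' hsum hA M
  have hkM : ∀ x : M, e'' • x = 0 := lmod_killed e' e'' he' hsum hA M
  have hk : ∀ i : Fin (n + 1), ∀ x : Mc i, e'' • x = 0 := by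
    intro i
    induction i using Fin.induction with
    | zero => exact killed_of_lequiv e' e'' hsum g0.symm hkM
    | succ i ih =>
      obtain ⟨P, iPa, iPm, π, ⟨hsurj, hproj, hker⟩, ⟨g⟩⟩ := hstep i
      letI := iPa; letI := iPm
      have hkP : ∀ p : P, e'' • p = 0 :=
        killed_of_cover e' e'' he'' hsum hA K π hker ih
      have hkker : ∀ y : ↥(LinearMap.ker π), e'' • y = 0 := by
        intro y
        refine Subtype.ext ?_
        show e'' • y.1 = 0
        exact hkP y.1
      exact killed_of_lequiv e' e'' hsum g.symm hkker
  have hkX : ∀ x : X, e'' • x = 0 :=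
    killed_of_lequiv e' e'' hsum gl (hk (Fin.last n))
  letI : ∀ i, Module R' (Mc i) := fun i => rmod e' e'' he' hsum (Mc i) (hk i)
  letI instXR := rmod e' e'' he' hsum X hkX
  refine ⟨hkX, Mc, iA, fun i => rmod e' e'' he' hsum (Mc i) (hk i), ⟨?_⟩, ⟨?_⟩, fun i => ?_⟩
  · exact
      { toFun := g0, invFun := g0.symm, left_inv := g0.left_inv, right_inv := g0.right_inv,
        map_add' := g0.map_add,
        map_smul' := fun a x => by
          show g0 (a.1 • x) = a • g0 x
          have h2 := g0.map_smul a.1 x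
          rw [h2]
          show ρ a.1 • g0 x = a • g0 x
          rw [cHom_corner] }
  · exact
      { toFun := gl, invFun := gl.symm, left_inv := gl.left_inv, right_inv := gl.right_inv,
        map_add' := gl.map_add,
        map_smul' := fun a x => by
          show gl (a.1 • x) = a.1 • gl x
          exact gl.map_smul a.1 x }
  · obtain ⟨hk', hsyz⟩ := isSyz1_rmod e' e'' he' he'' hsum hA K _ _
      (hk i.castSucc) (hstep i)
    exact hsyz

include he'' hA in
theorem pdim_lmod (K : Type u) [Field K] [Algebra K Λ] [FiniteDimensional K Λ]
    (M : Type u) [AddCommGroup M] [iM : Module R' M] :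
    @pdim Λ _ M _ (lmod e' e'' he' hsum hA M) = pdim R' M := by
  unfold pdim
  refine congrArg sInf (Set.ext fun d => ⟨?_, ?_⟩)
  · rintro ⟨n, hdn, X, iXa, iXm, hsyz, hproj⟩
    letI := iXa; letI := iXm
    obtain ⟨hkX, hsyz'⟩ := isSyz_rmod e' e'' he' he'' hsum hA K n M X hsyz
    exact ⟨n, hdn, X, iXa, rmod e' e'' he' hsum X hkX,
      hsyz', projective_rmod e' e'' he' hsum hA X hkX hproj⟩
  · rintro ⟨n, hdn, X, iXa, iXm, hsyz, hproj⟩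
    letI := iXa; letI := iXm
    exact ⟨n, hdn, X, iXa, lmod e' e'' he' hsum hA X,
      isSyz_lmod e' e'' he' he'' hsum hA n M X hsyz,
      projective_lmod e' e'' he' he'' hsum hA X hproj⟩

include hA in
theorem finite_lmod (M : Type u) [AddCommGroup M] [iM : Module R' M]
    [h : Module.Finite R' M] :
    @Module.Finite Λ M _ _ (lmod e' e'' he' hsum hA M) := by
  letI := lmod e' e'' he' hsum hA M
  obtain ⟨S, hS⟩ := h.fg_top
  refine ⟨⟨S, ?_⟩⟩
  rw [eq_top_iff]
  intro x _
  have hx : x ∈ Submodule.span R' (S : Set M) := by rw [hS]; trivial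
  refine Submodule.span_induction ?_ ?_ ?_ ?_ hx
  · exact fun y hy => Submodule.subset_span hy
  · exact Submodule.zero_mem _
  · exact fun y z _ _ hy hz => Submodule.add_mem _ hy hz
  · intro a y _ hy
    have key : a • y = (a.1 : Λ) • y := by
      show a • y = ρ a.1 • y
      rw [cHom_corner]
    rw [key]
    exact Submodule.smul_mem _ a.1 hy

include he'' hsum hA in
theorem prim_corner {g : Λ} (hg : IsPrimitiveIdem Λ g) :
    e' * g * e' = 0 ∨ IsPrimitiveIdem R' (ρ g) := by
  obtain ⟨hgg, hgne, hgsplit⟩ := hg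
  set A := e' * g * e' with hAdef
  set B := e' * g * e'' with hBdef
  set D := e'' * g * e'' with hDdef
  have hs3 : e' * e'' = 0 := ee'₁ e' e'' he' hsum
  have hs4 : e'' * e' = 0 := ee'₂ e' e'' he' hsum
  -- the core relation coming from g * g = g
  have core : ∀ x y : Λ, x * g * e' * g * y + x * g * e'' * g * y = x * g * y := by
    intro x y
    have h1 : x * g * e' * g * y + x * g * e'' * g * y = x * (g * ((e' + e'') * g)) * y := by
      noncomm_ring
    rw [h1, hsum, one_mul, hgg]
  have sand : ∀ a b c d : Λ, (a * g * b) * (c * g * d) = a * g * (b * c) * g * d := by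
    intro a b c d
    noncomm_ring
  -- vanishing products
  have hAD : A * D = 0 := by rw [hAdef, hDdef, sand, hs3]; noncomm_ring
  have hDA : D * A = 0 := by rw [hAdef, hDdef, sand, hs4]; noncomm_ring
  have hBA : B * A = 0 := by rw [hAdef, hBdef, sand, hs4]; noncomm_ring
  have hBB : B * B = 0 := by rw [hBdef, sand, hs4]; noncomm_ring
  have hDB : D * B = 0 := by rw [hBdef, hDdef, sand, hs4]; noncomm_ring
  -- idempotency and the mixed relation
  have hAA : A * A = A := by
    rw [hAdef, sand, he']
    have h2 : e' * g * e'' * g * e' = e' * g * (e'' * g * e') := by noncomm_ring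
    have h3 := core e' e'
    rw [h2, hA g, mul_zero, add_zero] at h3
    exact h3
  have hDD : D * D = D := by
    rw [hDdef, sand, he'']
    have h2 : e'' * g * e' * g * e'' = e'' * g * e' * g * e'' := rfl
    have h3 := core e'' e''
    have h4 : e'' * g * e' * g * e'' = (e'' * g * e') * (g * e'') := by noncomm_ring
    rw [h4, hA g, zero_mul, zero_add] at h3
    exact h3
  have hABBD : A * B + B * D = B := by
    rw [hAdef, hBdef, hDdef, sand, sand, he', he'']
    exact core e' e''
  have hABD : A * (B * D) = 0 := by
    have h5 := congrArg (fun t => A * t) hABBD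
    simp only [mul_add] at h5
    rw [← mul_assoc A A B, hAA] at h5
    exact (add_eq_left).1 h5
  -- the orthogonal pair of idempotents refining g
  set f₁ := A + A * B with hf₁def
  set f₂ := D + B * D with hf₂def
  have hdec : g = A + B + D := by
    have h1 : g = (e' + e'') * g * (e' + e'') := by rw [hsum, one_mul, mul_one]
    have h2 : (e' + e'') * g * (e' + e'') = A + B + (e'' * g * e' + D) := by
      rw [hAdef, hBdef, hDdef]; noncomm_ring
    rw [h1, h2, hA g, zero_add]
  have hf₁idem : IsIdempotentElem f₁ := by
    show f₁ * f₁ = f₁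
    have expand : f₁ * f₁ = A * A + (A * A) * B + A * (B * A) + (A * (B * A)) * B := by
      rw [hf₁def]; noncomm_ring
    rw [expand, hAA, hBA]
    simp [hf₁def]
  have hf₂idem : IsIdempotentElem f₂ := by
    show f₂ * f₂ = f₂
    have expand : f₂ * f₂ = D * D + (D * B) * D + B * (D * D) + (B * (D * B)) * D := by
      rw [hf₂def]; noncomm_ring
    rw [expand, hDD, hDB]
    simp [hf₂def]
  have hf₁f₂ : f₁ * f₂ = 0 := by
    have expand : f₁ * f₂ = A * D + A * (B * D) + A * (B * D) + A * (B * B) * D := by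
      rw [hf₁def, hf₂def]; noncomm_ring
    rw [expand, hAD, hABD, hBB]
    simp
  have hf₂f₁ : f₂ * f₁ = 0 := by
    have expand : f₂ * f₁ = D * A + (D * A) * B + B * (D * A) + (B * (D * A)) * B := by
      rw [hf₁def, hf₂def]; noncomm_ring
    rw [expand, hDA]
    simp
  have hf₁f₂sum : f₁ + f₂ = g := by
    rw [hf₁def, hf₂def, hdec]
    have hre : A + A * B + (D + B * D) = A + (A * B + B * D) + D := by abel
    rw [hre, hABBD]
  have hBe' : B * e' = 0 := by
    rw [hBdef, mul_assoc, hs4, mul_zero]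
  have he'Ae' : e' * A * e' = A := by
    have : e' * A * e' = (e' * e') * g * (e' * e') := by rw [hAdef]; noncomm_ring
    rw [this, he']
  have hf₁A : e' * f₁ * e' = A := by
    have expand : e' * f₁ * e' = e' * A * e' + (e' * A) * (B * e') := by
      rw [hf₁def]; noncomm_ring
    rw [expand, hBe', mul_zero, add_zero, he'Ae']
  rcases hgsplit f₁ f₂ hf₁idem hf₂idem hf₁f₂ hf₂f₁ hf₁f₂sum with hf₁0 | hf₂0
  · left
    show A = 0
    rw [← hf₁A, hf₁0, mul_zero, zero_mul]
  · by_cases hA0 : A = 0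
    · exact Or.inl hA0
    right
    have hgf₁ : g = f₁ := by
      rw [← hf₁f₂sum, hf₂0, add_zero]
    have hρval : (ρ g).1 = A := cHom_val e' e'' he' hsum hA g
    refine ⟨Subtype.ext ?_, ?_, ?_⟩
    · rw [corner_val_mul, hρval, hAA]
    · intro h0
      exact hA0 (by rw [← hρval, h0]; rfl)
    · intro p q hp hq hpq hqp hpqsum
      have hpval : p.1 * p.1 = p.1 := congrArg Subtype.val hp
      have hqval : q.1 * q.1 = q.1 := congrArg Subtype.val hq
      have hpq0 : p.1 * q.1 = 0 := congrArg Subtype.val hpq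
      have hqp0 : q.1 * p.1 = 0 := congrArg Subtype.val hqp
      have hsumA : p.1 + q.1 = A := by
        have := congrArg Subtype.val hpqsum
        rw [corner_val_add, hρval] at this
        exact this
      have hBx : ∀ x : R', B * x.1 = 0 := by
        intro x
        have h1 : B * x.1 = B * (e' * x.1) := by rw [x.2.1]
        rw [h1, ← mul_assoc, hBe', zero_mul]
      set pt := p.1 + p.1 * B with hptdef
      set qt := q.1 + q.1 * B with hqtdef
      have hptidem : IsIdempotentElem pt := by
        show pt * pt = pt
        have expand : pt * pt = p.1 * p.1 + (p.1 * p.1) * B + p.1 * (B * p.1)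
            + (p.1 * (B * p.1)) * B := by rw [hptdef]; noncomm_ring
        rw [expand, hpval, hBx p]
        simp [hptdef]
      have hqtidem : IsIdempotentElem qt := by
        show qt * qt = qt
        have expand : qt * qt = q.1 * q.1 + (q.1 * q.1) * B + q.1 * (B * q.1)
            + (q.1 * (B * q.1)) * B := by rw [hqtdef]; noncomm_ring
        rw [expand, hqval, hBx q]
        simp [hqtdef]
      have hptqt : pt * qt = 0 := by
        have expand : pt * qt = p.1 * q.1 + (p.1 * q.1) * B + p.1 * (B * q.1)
            + (p.1 * (B * q.1)) * B := by rw [hptdef, hqtdef]; noncomm_ring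
        rw [expand, hpq0, hBx q]
        simp
      have hqtpt : qt * pt = 0 := by
        have expand : qt * pt = q.1 * p.1 + (q.1 * p.1) * B + q.1 * (B * p.1)
            + (q.1 * (B * p.1)) * B := by rw [hqtdef, hptdef]; noncomm_ring
        rw [expand, hqp0, hBx p]
        simp
      have hptqtsum : pt + qt = g := by
        rw [hgf₁, hf₁def, hptdef, hqtdef, ← hsumA]
        noncomm_ring
      have hext : ∀ x : R', e' * (x.1 + x.1 * B) * e' = x.1 := by
        intro x
        have expand : e' * (x.1 + x.1 * B) * e' = e' * x.1 * e' + (e' * x.1) * (B * e') := by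
          noncomm_ring
        rw [expand, hBe', mul_zero, add_zero, x.2.1, x.2.2]
      rcases hgsplit pt qt hptidem hqtidem hptqt hqtpt hptqtsum with hpt0 | hqt0
      · left
        refine Subtype.ext ?_
        have h1 : e' * pt * e' = p.1 := hext p
        rw [← h1, hpt0, mul_zero, zero_mul]
        rfl
      · right
        refine Subtype.ext ?_
        have h1 : e' * qt * e' = q.1 := hext q
        rw [← h1, hqt0, mul_zero, zero_mul]
        rfl

include he'' hA in
theorem eTopRank_lmod (K : Type u) [Field K] [Algebra K Λ] (M : Type u)
    [AddCommGroup M] [iM : Module R' M] (g : Λ) :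
    @eTopRank K _ Λ _ _ g M _ (lmod e' e'' he' hsum hA M) = eTopRank K R' (ρ g) M := by
  letI instΛ := lmod e' e'' he' hsum hA M
  set q1 : Submodule Λ M := (ringJac Λ) • (⊤ : Submodule Λ M) with hq1
  set q2 : Submodule R' M := (ringJac R') • (⊤ : Submodule R' M) with hq2
  have h12 : ∀ x : M, x ∈ q1 → x ∈ q2 := by
    intro x hx
    refine Submodule.smul_induction_on hx ?_ (fun a b ha hb => add_mem ha hb)
    intro j hj m _
    have key : j • m = ρ j • m := rfl
    rw [key]
    exact Submodule.smul_mem_smul (jac_cHom_mem e' e'' he' hsum hA hj) Submodule.mem_top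
  have h21 : ∀ x : M, x ∈ q2 → x ∈ q1 := by
    intro x hx
    refine Submodule.smul_induction_on hx ?_ (fun a b ha hb => add_mem ha hb)
    intro a ha m _
    have key : a • m = (a.1 : Λ) • m := by
      show a • m = ρ a.1 • m
      rw [cHom_corner]
    rw [key]
    exact Submodule.smul_mem_smul (corner_jac_le e' e'' he' hsum hA ha) Submodule.mem_top
  letI instT2Λ : Module Λ (M ⧸ q2) := lmod e' e'' he' hsum hA (M ⧸ q2)
  have hkT1 : ∀ t : M ⧸ q1, e'' • t = 0 := by
    intro t
    obtain ⟨x, rfl⟩ := Submodule.Quotient.mk_surjective q1 t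
    rw [← Submodule.Quotient.mk_smul]
    have hx0 : e'' • x = 0 := lmod_killed e' e'' he' hsum hA M x
    rw [hx0, Submodule.Quotient.mk_zero]
  letI instT1R : Module R' (M ⧸ q1) := rmod e' e'' he' hsum (M ⧸ q1) hkT1
  let mkQ2' : M →ₗ[Λ] M ⧸ q2 :=
    { toFun := Submodule.Quotient.mk
      map_add' := fun x y => Submodule.Quotient.mk_add q2
      map_smul' := fun a x => by
        show (Submodule.Quotient.mk (ρ a • x) : M ⧸ q2)
          = ρ a • (Submodule.Quotient.mk x : M ⧸ q2)
        exact Submodule.Quotient.mk_smul q2 (ρ a) x }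
  let f12 : (M ⧸ q1) →ₗ[Λ] M ⧸ q2 :=
    Submodule.liftQ q1 mkQ2' (fun x hx => by
      rw [LinearMap.mem_ker]
      exact (Submodule.Quotient.mk_eq_zero q2).2 (h12 x hx))
  let mkQ1' : M →ₗ[R'] M ⧸ q1 :=
    { toFun := Submodule.Quotient.mk
      map_add' := fun x y => Submodule.Quotient.mk_add q1
      map_smul' := fun a x => by
        show (Submodule.Quotient.mk (a • x) : M ⧸ q1)
          = (a.1 : Λ) • (Submodule.Quotient.mk x : M ⧸ q1)
        have h0 : (a.1 : Λ) • x = a • x := by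
          show ρ a.1 • x = a • x
          rw [cHom_corner]
        rw [← h0]
        exact Submodule.Quotient.mk_smul q1 (a.1 : Λ) x }
  let f21 : (M ⧸ q2) →ₗ[R'] M ⧸ q1 :=
    Submodule.liftQ q2 mkQ1' (fun x hx => by
      rw [LinearMap.mem_ker]
      exact (Submodule.Quotient.mk_eq_zero q1).2 (h21 x hx))
  have hinv1 : ∀ t : M ⧸ q1, f21 (f12 t) = t := by
    intro t
    obtain ⟨x, rfl⟩ := Submodule.Quotient.mk_surjective q1 t
    rfl
  have hinv2 : ∀ t : M ⧸ q2, f12 (f21 t) = t := by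
    intro t
    obtain ⟨x, rfl⟩ := Submodule.Quotient.mk_surjective q2 t
    rfl
  have halg : ∀ k : K, ρ (algebraMap K Λ k) = algebraMap K R' k := by
    intro k
    refine Subtype.ext ?_
    rw [cHom_val, Algebra.algebraMap_eq_smul_one, Algebra.algebraMap_eq_smul_one]
    show e' * (k • (1 : Λ)) * e' = k • e'
    rw [mul_smul_comm, mul_one, smul_mul_assoc, he']
  letI instK1 : Module K (M ⧸ q1) := Module.compHom _ (algebraMap K Λ)
  letI instK2 : Module K (M ⧸ q2) := Module.compHom _ (algebraMap K R')
  let E : (M ⧸ q1) ≃ₗ[K] (M ⧸ q2) :=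
    { toFun := f12
      invFun := f21
      left_inv := hinv1
      right_inv := hinv2
      map_add' := f12.map_add
      map_smul' := fun k t => by
        show f12 (algebraMap K Λ k • t) = algebraMap K R' k • f12 t
        rw [f12.map_smul]
        show ρ (algebraMap K Λ k) • f12 t = algebraMap K R' k • f12 t
        rw [halg k] }
  have key : ∀ t : M ⧸ q1, E (g • t) = ρ g • E t := fun t => f12.map_smul g t
  have hrange : (Set.range fun t : M ⧸ q2 => ρ g • t)
      = E '' (Set.range fun t : M ⧸ q1 => g • t) := by
    ext y
    constructor
    · rintro ⟨t, rfl⟩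
      refine ⟨g • E.symm t, ⟨E.symm t, rfl⟩, ?_⟩
      rw [key, E.apply_symm_apply]
    · rintro ⟨z, ⟨t, rfl⟩, rfl⟩
      exact ⟨E t, (key t).symm⟩
  have hspan : Submodule.span K (Set.range fun t : M ⧸ q2 => ρ g • t)
      = Submodule.map (E : (M ⧸ q1) →ₗ[K] (M ⧸ q2))
        (Submodule.span K (Set.range fun t : M ⧸ q1 => g • t)) := by
    rw [hrange]
    exact (Submodule.map_span _ _).symm
  have final := LinearEquiv.rank_eq
    (E.submoduleMap (Submodule.span K (Set.range fun t : M ⧸ q1 => g • t)))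
  rw [← hspan] at final
  exact final

include he' hsum in
theorem eTopRank_corner_zero (K : Type u) [Field K] [Algebra K Λ] (M : Type u)
    [AddCommGroup M] [iM : Module R' M] : eTopRank K R' (0 : R') M = 0 := by
  letI : Module K (topQuot R' M) := Module.compHom _ (algebraMap K R')
  have hsp : Submodule.span K (Set.range fun x : topQuot R' M => (0 : R') • x)
      = (⊥ : Submodule K (topQuot R' M)) := by
    refine le_bot_iff.1 (Submodule.span_le.2 ?_)
    rintro _ ⟨t, rfl⟩
    show (0 : R') • t ∈ (⊥ : Submodule K (topQuot R' M))
    rw [zero_smul]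
    exact Submodule.zero_mem ⊥
  show Module.rank K
    ↥(Submodule.span K (Set.range fun x : topQuot R' M => (0 : R') • x)) = 0
  rw [hsp]
  exact rank_bot K (topQuot R' M)

end CornerAux

/-- Corollary 6, second part. For a stacking partition,
`fin dim_n Λ' ≤ fin dim_n Λ` for all `n ≥ 1`. -/
theorem stacking_findimN_le
    (K : Type) [Field K] (Λ : Type) [Ring Λ] [Algebra K Λ] [FiniteDimensional K Λ]
    (ι : Type) [Fintype ι] [DecidableEq ι] (e : ι → Λ)
    (hco : CompleteOrthogonalIdempotents e) (hprim : ∀ i, IsPrimitiveIdem Λ (e i))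
    (S : Finset ι) (hS : S.Nonempty) (hS' : Sᶜ.Nonempty)
    (e' e'' : Λ) (hd' : e' = ∑ i ∈ S, e i) (hd'' : e'' = ∑ i ∈ Sᶜ, e i)
    (he' : IsIdempotentElem e') (he'' : IsIdempotentElem e'') (hsum : e' + e'' = 1)
    -- condition (a) : e''Λe' = 0
    (hA : ∀ x : Λ, e'' * x * e' = 0)
    -- condition (b) : e'Λe''·J·f = 0 for every f ∈ E with fJ ≠ 0
    (hB : ∀ i : ι, (∃ j ∈ ringJac Λ, e i * j ≠ 0) →
      ∀ x j, j ∈ ringJac Λ → e' * x * e'' * j * e i = 0)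
 :
    ∀ n : ℕ, 1 ≤ n → findimN K (Corner e' he') n ≤ findimN K Λ n := by
  intro n _
  refine sSup_le ?_
  rintro d ⟨M, iAG, iMod, hfin, hpd, hne, hrank⟩
  letI := iAG; letI := iMod; letI := hfin
  letI instΛ : Module Λ M := lmod e' e'' he' hsum hA M
  refine le_sSup ⟨M, iAG, instΛ, ?_, ?_, hne, ?_⟩
  · exact finite_lmod e' e'' he' hsum hA M
  · exact (pdim_lmod e' e'' he' he'' hsum hA K M).trans hpd
  · intro g hg
    rw [eTopRank_lmod e' e'' he' he'' hsum hA K M g]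
    rcases prim_corner e' e'' he' he'' hsum hA hg with h0 | hprim'
    · have hz : cornerHom e' e'' he' hsum hA g = (0 : Corner e' he') :=
        Subtype.ext (by rw [cHom_val]; exact h0)
      rw [hz, eTopRank_corner_zero e' e'' he' hsum K M]
      exact Cardinal.zero_le _
    · exact hrank _ hprim'
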